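/- Let 0 → C^0 → C^1 → ⋯ → C^n → 0 be a cochain complex of finite-dimensional complex inner product spaces with differentials d_j : C^j → C^{j+1} satisfying d_{j+1} ∘ d_j = 0, and let Δ_j = d_{j-1} d_{j-1}* + d_j* d_j be the associated Laplacians. For μ ≥ 0, let E_j(≤ μ) ⊆ C^j be the span of eigenvectors of Δ_j with eigenvalue at most μ, and let H^j = ker d_j / im d_{j-1}. Then for every q, ∑_{0 ≤ j ≤ q} (−1)^{q−j} dim H^j ≤ ∑_{0 ≤ j ≤ q} (−1)^{q−j} dim E_j(≤ μ). -/

import Mathlib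

set_option maxHeartbeats 1000000

open ContinuousLinearMap Module Submodule

/-- Rank-nullity for a linear map restricted to a submodule. -/
lemma aux_rank_nullity {V V₂ : Type*} [AddCommGroup V] [Module ℂ V]
    [AddCommGroup V₂] [Module ℂ V₂] [FiniteDimensional ℂ V]
    (f : V →ₗ[ℂ] V₂) (W : Submodule ℂ V) :
    finrank ℂ W = finrank ℂ (W ⊓ LinearMap.ker f : Submodule ℂ V)
      + finrank ℂ (W.map f) := by
  have h1 := LinearMap.finrank_range_add_finrank_ker (f.domRestrict W)
  rw [LinearMap.range_domRestrict, LinearMap.ker_domRestrict] at h1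
  have h2 : finrank ℂ (Submodule.comap W.subtype (LinearMap.ker f))
      = finrank ℂ (W ⊓ LinearMap.ker f : Submodule ℂ V) := by
    rw [← Submodule.map_comap_subtype]
    exact (Submodule.equivMapOfInjective W.subtype W.injective_subtype _).finrank_eq
  omega

lemma aux_comap_subtype_finrank {V : Type*} [AddCommGroup V] [Module ℂ V]
    [FiniteDimensional ℂ V] (p q : Submodule ℂ V) :
    finrank ℂ (Submodule.comap p.subtype q) = finrank ℂ (p ⊓ q : Submodule ℂ V) := by
  rw [← Submodule.map_comap_subtype]
  exact (Submodule.equivMapOfInjective p.subtype p.injective_subtype _).finrank_eq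

/-- An operator intertwining two "laplacians" maps the span of low eigenvectors of the
first into the span of low eigenvectors of the second. -/
lemma aux_span_map {V V₂ : Type*} [NormedAddCommGroup V] [InnerProductSpace ℂ V]
    [NormedAddCommGroup V₂] [InnerProductSpace ℂ V₂]
    (f : V →L[ℂ] V₂) (Δ1 : V →L[ℂ] V) (Δ2 : V₂ →L[ℂ] V₂)
    (hcomm : ∀ v, f (Δ1 v) = Δ2 (f v)) (μ : ℝ) :
    ∀ v ∈ Submodule.span ℂ {v : V | ∃ c : ℝ, c ≤ μ ∧ Δ1 v = (c : ℂ) • v},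
      f v ∈ Submodule.span ℂ {v : V₂ | ∃ c : ℝ, c ≤ μ ∧ Δ2 v = (c : ℂ) • v} := by
  intro v hv
  have : Submodule.map (f : V →ₗ[ℂ] V₂)
      (Submodule.span ℂ {v : V | ∃ c : ℝ, c ≤ μ ∧ Δ1 v = (c : ℂ) • v})
      ≤ Submodule.span ℂ {v : V₂ | ∃ c : ℝ, c ≤ μ ∧ Δ2 v = (c : ℂ) • v} := by
    rw [Submodule.map_span]
    apply Submodule.span_mono
    rintro _ ⟨w, ⟨c, hc, hw⟩, rfl⟩
    exact ⟨c, hc, by simp only [ContinuousLinearMap.coe_coe, ← hcomm, hw, map_smul]⟩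
  exact this ⟨v, hv, rfl⟩

/-- The core Hodge-theoretic dimension count. -/
lemma aux_hodge {V' V V'' : Type*}
    [NormedAddCommGroup V'] [InnerProductSpace ℂ V'] [FiniteDimensional ℂ V']
    [NormedAddCommGroup V] [InnerProductSpace ℂ V] [FiniteDimensional ℂ V]
    [NormedAddCommGroup V''] [InnerProductSpace ℂ V''] [FiniteDimensional ℂ V'']
    (dm : V' →L[ℂ] V) (d : V →L[ℂ] V'') (hdd : ∀ x, d (dm x) = 0)
    (Δ : V →L[ℂ] V)
    (hΔ : Δ = (ContinuousLinearMap.adjoint d).comp d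
      + dm.comp (ContinuousLinearMap.adjoint dm))
    (W : Submodule ℂ V) (W' : Submodule ℂ V')
    (hΔW : ∀ v ∈ W, Δ v ∈ W)
    (hdmW : ∀ v ∈ W', dm v ∈ W)
    (hdmsW : ∀ v ∈ W, ContinuousLinearMap.adjoint dm v ∈ W')
    (hker : LinearMap.ker (Δ : V →ₗ[ℂ] V) ≤ W) :
    finrank ℂ (W ⊓ LinearMap.ker (d : V →ₗ[ℂ] V'') : Submodule ℂ V)
      = finrank ℂ (LinearMap.ker (Δ : V →ₗ[ℂ] V)) + finrank ℂ (W'.map (dm : V' →ₗ[ℂ] V)) := by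
  have hΔv : ∀ v, Δ v = ContinuousLinearMap.adjoint d (d v)
      + dm (ContinuousLinearMap.adjoint dm v) := by
    intro v; rw [hΔ]; rfl
  have hkerdd : ∀ v, Δ v = 0 → d v = 0 ∧ ContinuousLinearMap.adjoint dm v = 0 := by
    intro v hv
    have h0 : (inner ℂ (Δ v) v : ℂ) = 0 := by rw [hv, inner_zero_left]
    rw [hΔv, inner_add_left, adjoint_inner_left] at h0
    have h1 : (inner ℂ (dm (ContinuousLinearMap.adjoint dm v)) v : ℂ)
        = inner ℂ (ContinuousLinearMap.adjoint dm v) (ContinuousLinearMap.adjoint dm v) :=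
      (adjoint_inner_right dm _ v).symm
    rw [h1, inner_self_eq_norm_sq_to_K, inner_self_eq_norm_sq_to_K,
      ← RCLike.ofReal_pow, ← RCLike.ofReal_pow, ← RCLike.ofReal_add,
      RCLike.ofReal_eq_zero] at h0
    have h2 : (‖d v‖ ^ 2 + ‖ContinuousLinearMap.adjoint dm v‖ ^ 2 : ℝ) = 0 := h0
    constructor <;> rw [← norm_eq_zero] <;> nlinarith [norm_nonneg (d v),
      norm_nonneg (ContinuousLinearMap.adjoint dm v), sq_nonneg (‖d v‖)]
  set K := LinearMap.ker (Δ : V →ₗ[ℂ] V) with hK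
  have hKd : ∀ v ∈ K, d v = 0 := fun v hv => (hkerdd v (LinearMap.mem_ker.mp hv)).1
  have hKdm : ∀ v ∈ K, ContinuousLinearMap.adjoint dm v = 0 :=
    fun v hv => (hkerdd v (LinearMap.mem_ker.mp hv)).2
  have hsa : ContinuousLinearMap.adjoint Δ = Δ := by
    rw [hΔ]; simp [adjoint_comp, adjoint_adjoint]
  set F := W ⊓ LinearMap.ker (d : V →ₗ[ℂ] V'') ⊓ Kᗮ with hF
  have himF : W'.map (dm : V' →ₗ[ℂ] V) ≤ F := by
    rintro _ ⟨w, hw, rfl⟩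
    refine ⟨⟨hdmW w hw, LinearMap.mem_ker.mpr (hdd w)⟩, ?_⟩
    intro u hu
    show (inner ℂ u (dm w) : ℂ) = 0
    rw [(adjoint_inner_left dm w u).symm, hKdm u hu, inner_zero_left]
  have hFinv : ∀ v ∈ F, Δ v ∈ F := by
    rintro v ⟨⟨hvW, hvd⟩, hvK⟩
    have hvd' : d v = 0 := LinearMap.mem_ker.mp hvd
    refine ⟨⟨hΔW v hvW, LinearMap.mem_ker.mpr ?_⟩, ?_⟩
    · rw [ContinuousLinearMap.coe_coe, hΔv, hvd', map_zero, zero_add, hdd]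
    · intro u hu
      have : (inner ℂ u (Δ v) : ℂ) = inner ℂ (Δ u) v := by
        conv_lhs => rw [← hsa]
        exact adjoint_inner_right Δ u v
      rw [this, show Δ u = 0 from LinearMap.mem_ker.mp hu, inner_zero_left]
  have hFinv' : ∀ x ∈ F, (Δ : V →ₗ[ℂ] V) x ∈ F := hFinv
  set T : F →ₗ[ℂ] F := LinearMap.restrict (Δ : V →ₗ[ℂ] V) hFinv' with hT
  have hTinj : Function.Injective T := by
    rw [← LinearMap.ker_eq_bot]
    rw [Submodule.eq_bot_iff]
    rintro ⟨x, hx⟩ hx0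
    have hΔx : Δ x = 0 := by
      have := congrArg (Subtype.val) (LinearMap.mem_ker.mp hx0)
      simpa [hT, LinearMap.restrict_apply] using this
    have hxK : x ∈ K := LinearMap.mem_ker.mpr hΔx
    have hxKp : x ∈ Kᗮ := hx.2
    have : x = 0 := by
      have := (Submodule.mem_orthogonal K x).mp hxKp x hxK
      rwa [inner_self_eq_zero] at this
    simp [this]
  have hTsurj : Function.Surjective T := (LinearMap.injective_iff_surjective).mp hTinj
  have hFsub : F ≤ W'.map (dm : V' →ₗ[ℂ] V) := by
    intro v hv
    obtain ⟨⟨u, hu⟩, hTu⟩ := hTsurj ⟨v, hv⟩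
    have hΔu : Δ u = v := by
      have := congrArg (Subtype.val) hTu
      simpa [hT, LinearMap.restrict_apply] using this
    have hud : d u = 0 := LinearMap.mem_ker.mp hu.1.2
    have : v = dm (ContinuousLinearMap.adjoint dm u) := by
      rw [← hΔu, hΔv, hud, map_zero, zero_add]
    exact ⟨ContinuousLinearMap.adjoint dm u, hdmsW u hu.1.1, this.symm⟩
  have hFeq : F = W'.map (dm : V' →ₗ[ℂ] V) := le_antisymm hFsub himF
  have hsum : W ⊓ LinearMap.ker (d : V →ₗ[ℂ] V'') = K ⊔ F := by
    apply le_antisymm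
    · rintro v ⟨hvW, hvd⟩
      set p := (orthogonalProjection K v : V) with hp
      have hpK : p ∈ K := (orthogonalProjection K v).2
      have hvpK : v - p ∈ Kᗮ := Submodule.sub_starProjection_mem_orthogonal (K := K) v
      have hvp : v - p ∈ F := by
        refine ⟨⟨Submodule.sub_mem W hvW (hker hpK), LinearMap.mem_ker.mpr ?_⟩, hvpK⟩
        rw [map_sub, LinearMap.mem_ker.mp hvd, ContinuousLinearMap.coe_coe, hKd p hpK, sub_zero]
      have : v = p + (v - p) := by abel
      rw [this]
      exact Submodule.add_mem _ (Submodule.mem_sup_left hpK) (Submodule.mem_sup_right hvp)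
    · apply sup_le
      · intro v hv
        exact ⟨hker hv, LinearMap.mem_ker.mpr (hKd v hv)⟩
      · exact le_trans inf_le_left le_rfl
  have hdisj : K ⊓ F = ⊥ := by
    apply Submodule.eq_bot_iff _ |>.mpr
    rintro x ⟨hxK, hxF⟩
    have := (Submodule.mem_orthogonal K x).mp hxF.2 x hxK
    rwa [inner_self_eq_zero] at this
  have hfr := Submodule.finrank_sup_add_finrank_inf_eq K F
  rw [hdisj, finrank_bot, add_zero] at hfr
  rw [hsum, hfr, hFeq]

/-- Demailly/Witten linear-algebra lemma: for a finite cochain complex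
    0 → C⁰ → ⋯ → Cⁿ → 0 of finite-dimensional complex inner product spaces,
    with Laplacians Δⱼ = d*ⱼ dⱼ + dⱼ₋₁ d*ⱼ₋₁ and Eⱼ(≤ μ) the span of eigenvectors
    of Δⱼ with eigenvalue ≤ μ, the alternating sums of cohomology dimensions are
    bounded by the alternating sums of dim Eⱼ(≤ μ). -/
theorem stmt_8 (n : ℕ) (C : ℕ → Type*)
    [∀ j, NormedAddCommGroup (C j)] [∀ j, InnerProductSpace ℂ (C j)]
    [∀ j, FiniteDimensional ℂ (C j)]
    (d : ∀ j, C j →L[ℂ] C (j + 1))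
    (hd : ∀ j, (d (j + 1)).comp (d j) = 0)
    (htriv : ∀ j, n < j → Subsingleton (C j))
    (μ : ℝ) (hμ : 0 ≤ μ)
    (Δ : ∀ j, C j →L[ℂ] C j)
    (hΔ0 : Δ 0 = (ContinuousLinearMap.adjoint (d 0)).comp (d 0))
    (hΔsucc : ∀ j, Δ (j + 1) =
      (ContinuousLinearMap.adjoint (d (j + 1)) : C (j + 1 + 1) →L[ℂ] C (j + 1)).comp (d (j + 1)) +
        (d j).comp (ContinuousLinearMap.adjoint (d j)))
    (hdim : ℕ → ℕ)
    (hdim0 : hdim 0 = Module.finrank ℂ (LinearMap.ker (d 0 : C 0 →ₗ[ℂ] C (0 + 1))))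
    (hdimsucc : ∀ j, hdim (j + 1) =
      Module.finrank ℂ
        (LinearMap.ker (d (j + 1) : C (j + 1) →ₗ[ℂ] C (j + 1 + 1)) ⧸
          LinearMap.range (((d j : C j →ₗ[ℂ] C (j + 1))).codRestrict
            (LinearMap.ker (d (j + 1) : C (j + 1) →ₗ[ℂ] C (j + 1 + 1)))
            (fun x => LinearMap.mem_ker.mpr
              (by simpa using ContinuousLinearMap.ext_iff.mp (hd j) x))))) :
    ∀ q ≤ n, ∑ j ∈ Finset.range (q + 1), (-1 : ℤ) ^ (q - j) * (hdim j : ℤ)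
        ≤ ∑ j ∈ Finset.range (q + 1), (-1 : ℤ) ^ (q - j) *
            (Module.finrank ℂ
              (Submodule.span ℂ {v : C j | ∃ c : ℝ, c ≤ μ ∧ Δ j v = (c : ℂ) • v}) : ℤ) := by
  -- abbreviations
  let E : ∀ j, Submodule ℂ (C j) :=
    fun j => Submodule.span ℂ {v : C j | ∃ c : ℝ, c ≤ μ ∧ Δ j v = (c : ℂ) • v}
  let r : ℕ → ℕ := fun j => finrank ℂ ((E j).map ((d j : C j →ₗ[ℂ] C (j + 1))))
  let e : ℕ → ℕ := fun j => finrank ℂ (E j)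
  -- pointwise versions of complex property
  have hdv : ∀ j x, d (j + 1) (d j x) = 0 := fun j x => by
    have := ContinuousLinearMap.ext_iff.mp (hd j) x
    simpa using this
  have hdsv : ∀ j x, ContinuousLinearMap.adjoint (d j)
      (ContinuousLinearMap.adjoint (d (j + 1)) x) = 0 := fun j x => by
    have h : (ContinuousLinearMap.adjoint (d j)).comp
        (ContinuousLinearMap.adjoint (d (j + 1))) = 0 := by
      rw [← ContinuousLinearMap.adjoint_comp, hd j]
      simp
    have := ContinuousLinearMap.ext_iff.mp h x
    simpa using this
  -- kernels of laplacians lie in E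
  have hE_ker : ∀ j, LinearMap.ker (Δ j : C j →ₗ[ℂ] C j) ≤ E j := by
    intro j v hv
    apply Submodule.subset_span
    exact ⟨0, hμ, by rw [show Δ j v = 0 from LinearMap.mem_ker.mp hv]; simp⟩
  have hE_Δ : ∀ j, ∀ v ∈ E j, Δ j v ∈ E j :=
    fun j => aux_span_map (Δ j) (Δ j) (Δ j) (fun _ => rfl) μ
  -- commutation relations
  have hcomm_d : ∀ j v, d j (Δ j v) = Δ (j + 1) (d j v) := by
    intro j v
    match j with
    | 0 =>
      rw [hΔ0, hΔsucc 0]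
      simp [ContinuousLinearMap.comp_apply, ContinuousLinearMap.add_apply, hdv]
    | (j + 1) =>
      rw [hΔsucc j, hΔsucc (j + 1)]
      simp [ContinuousLinearMap.comp_apply, ContinuousLinearMap.add_apply, hdv]
  have hcomm_ds : ∀ j v, ContinuousLinearMap.adjoint (d j) (Δ (j + 1) v)
      = Δ j (ContinuousLinearMap.adjoint (d j) v) := by
    intro j v
    match j with
    | 0 =>
      rw [hΔsucc 0, hΔ0]
      simp [ContinuousLinearMap.comp_apply, ContinuousLinearMap.add_apply, hdsv]
    | (j + 1) =>
      rw [hΔsucc (j + 1), hΔsucc j]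
      simp [ContinuousLinearMap.comp_apply, ContinuousLinearMap.add_apply, hdsv]
  have hE_d : ∀ j, ∀ v ∈ E j, d j v ∈ E (j + 1) :=
    fun j => aux_span_map (d j) (Δ j) (Δ (j + 1)) (hcomm_d j) μ
  have hE_ds : ∀ j, ∀ v ∈ E (j + 1), ContinuousLinearMap.adjoint (d j) v ∈ E j :=
    fun j => aux_span_map (ContinuousLinearMap.adjoint (d j)) (Δ (j + 1)) (Δ j)
      (hcomm_ds j) μ
  -- kernels coincide (CLM vs LinearMap coercions)
  have hker_coe : ∀ j, LinearMap.ker ((d j : C j →ₗ[ℂ] C (j + 1)))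
      = LinearMap.ker (d j : C j →ₗ[ℂ] C (j + 1)) := fun j => rfl
  -- dimension identity at level 0
  have hhodgeE0 : finrank ℂ (E 0 ⊓ LinearMap.ker (d 0 : C 0 →ₗ[ℂ] C (0 + 1)) : Submodule ℂ (C 0))
      = finrank ℂ (LinearMap.ker (Δ 0 : C 0 →ₗ[ℂ] C 0)) := by
    have h := aux_hodge (0 : C 0 →L[ℂ] C 0) (d 0) (fun x => by simp) (Δ 0)
      (by rw [hΔ0]; simp) (E 0) ⊥ (hE_Δ 0)
      (fun v _ => by simpa using Submodule.zero_mem (E 0))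
      (fun v _ => by simp) (hE_ker 0)
    rw [Submodule.map_bot] at h
    simpa using h
  have hdim0' : hdim 0 = finrank ℂ (LinearMap.ker (Δ 0 : C 0 →ₗ[ℂ] C 0)) := by
    have h := aux_hodge (0 : C 0 →L[ℂ] C 0) (d 0) (fun x => by simp) (Δ 0)
      (by rw [hΔ0]; simp) ⊤ ⊥ (fun v _ => trivial)
      (fun v _ => trivial) (fun v _ => by simp) le_top
    rw [top_inf_eq, Submodule.map_bot] at h
    simpa [hdim0] using h
  have he0 : e 0 = hdim 0 + r 0 := by
    have h := aux_rank_nullity ((d 0 : C 0 →ₗ[ℂ] C 1)) (E 0)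
    rw [hker_coe 0, hhodgeE0, ← hdim0'] at h
    exact h
  -- dimension identity at level j+1
  have hhodgeE : ∀ j, finrank ℂ (E (j + 1) ⊓ LinearMap.ker (d (j + 1) : C (j + 1) →ₗ[ℂ] C (j + 1 + 1)) : Submodule ℂ (C (j + 1)))
      = finrank ℂ (LinearMap.ker (Δ (j + 1) : C (j + 1) →ₗ[ℂ] C (j + 1))) + r j := fun j =>
    aux_hodge (d j) (d (j + 1)) (hdv j) (Δ (j + 1)) (hΔsucc j) (E (j + 1)) (E j)
      (hE_Δ (j + 1)) (hE_d j) (hE_ds j) (hE_ker (j + 1))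
  have hdimsucc' : ∀ j, hdim (j + 1) = finrank ℂ (LinearMap.ker (Δ (j + 1) : C (j + 1) →ₗ[ℂ] C (j + 1))) := by
    intro j
    set X := LinearMap.range (((d j : C j →ₗ[ℂ] C (j + 1))).codRestrict
      (LinearMap.ker (d (j + 1) : C (j + 1) →ₗ[ℂ] C (j + 1 + 1)))
      (fun x => LinearMap.mem_ker.mpr
        (by simpa using ContinuousLinearMap.ext_iff.mp (hd j) x))) with hX
    have hq1 := Submodule.finrank_quotient_add_finrank X
    have hXr : finrank ℂ X = finrank ℂ (LinearMap.range ((d j : C j →ₗ[ℂ] C (j + 1)))) := by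
      have hle : LinearMap.range ((d j : C j →ₗ[ℂ] C (j + 1)))
          ≤ LinearMap.ker (d (j + 1) : C (j + 1) →ₗ[ℂ] C (j + 1 + 1)) := by
        rintro _ ⟨x, rfl⟩
        exact LinearMap.mem_ker.mpr (by simpa using hdv j x)
      rw [hX, LinearMap.range_codRestrict, aux_comap_subtype_finrank,
        inf_eq_right.mpr hle]
    have h := aux_hodge (d j) (d (j + 1)) (hdv j) (Δ (j + 1)) (hΔsucc j) ⊤ ⊤
      (fun v _ => trivial) (fun v _ => trivial) (fun v _ => trivial) le_top
    rw [top_inf_eq, Submodule.map_top] at h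
    rw [hdimsucc j, ← hX]
    omega
  have hesucc : ∀ j, e (j + 1) = hdim (j + 1) + r j + r (j + 1) := by
    intro j
    have h := aux_rank_nullity ((d (j + 1) : C (j + 1) →ₗ[ℂ] C (j + 2))) (E (j + 1))
    rw [hker_coe (j + 1), hhodgeE j, ← hdimsucc' j] at h
    exact h
  -- main telescoping identity
  have hsum : ∀ q, ∑ j ∈ Finset.range (q + 1), (-1 : ℤ) ^ (q - j) * (e j : ℤ)
      = (∑ j ∈ Finset.range (q + 1), (-1 : ℤ) ^ (q - j) * (hdim j : ℤ)) + (r q : ℤ) := by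
    intro q
    induction q with
    | zero =>
      simp only [show (0 : ℕ) + 1 = 1 from rfl, Finset.sum_range_one, Nat.sub_self,
        pow_zero, one_mul]
      rw [he0]; push_cast; ring
    | succ q ih =>
      rw [Finset.sum_range_succ, Finset.sum_range_succ
        (f := fun j => (-1 : ℤ) ^ (q + 1 - j) * (hdim j : ℤ))]
      have hflipE : ∑ j ∈ Finset.range (q + 1), (-1 : ℤ) ^ (q + 1 - j) * (e j : ℤ)
          = -∑ j ∈ Finset.range (q + 1), (-1 : ℤ) ^ (q - j) * (e j : ℤ) := by
        rw [← Finset.sum_neg_distrib]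
        apply Finset.sum_congr rfl
        intro x hx
        have hx' : x ≤ q := Nat.lt_succ_iff.mp (Finset.mem_range.mp hx)
        have hzz : q + 1 - x = (q - x) + 1 := by omega
        rw [hzz, pow_succ]
        ring
      have hflipH : ∑ j ∈ Finset.range (q + 1), (-1 : ℤ) ^ (q + 1 - j) * (hdim j : ℤ)
          = -∑ j ∈ Finset.range (q + 1), (-1 : ℤ) ^ (q - j) * (hdim j : ℤ) := by
        rw [← Finset.sum_neg_distrib]
        apply Finset.sum_congr rfl
        intro x hx
        have hx' : x ≤ q := Nat.lt_succ_iff.mp (Finset.mem_range.mp hx)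
        have hzz : q + 1 - x = (q - x) + 1 := by omega
        rw [hzz, pow_succ]
        ring
      rw [hflipE, hflipH, ih, Nat.sub_self, pow_zero, one_mul, one_mul]
      have := hesucc q
      push_cast [this]
      ring
  -- conclusion
  intro q _
  calc ∑ j ∈ Finset.range (q + 1), (-1 : ℤ) ^ (q - j) * (hdim j : ℤ)
      ≤ (∑ j ∈ Finset.range (q + 1), (-1 : ℤ) ^ (q - j) * (hdim j : ℤ)) + (r q : ℤ) :=
        le_add_of_nonneg_right (Int.natCast_nonneg _)
    _ = ∑ j ∈ Finset.range (q + 1), (-1 : ℤ) ^ (q - j) * (e j : ℤ) := (hsum q).symm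
    _ = _ := rfl
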